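/- Let n ≥ 2 and let f : ℝ → ℝ be twice continuously differentiable with f(t) > 0 and |f'(t)| < 1 for all t, satisfying f''(t)/(1 - f'(t)²)^{3/2} + (n-1)/( f(t)·(1 - f'(t)²)^{1/2} ) = n for all t ∈ ℝ. Define u : ℝⁿ → ℝ by u(x) = √( f(x₁)² + |x̄|² ). Then u is spacelike, i.e. |Du(x)| < 1 for all x ∈ ℝⁿ, and u satisfies the constant mean curvature equation div( Du/√(1 - |Du|²) ) = n on all of ℝⁿ. -/

import Mathlib

open Filter Real

/-- The divergence of a vector field `W` on `ℝⁿ`: `div W x = Σᵢ ∂ᵢ Wᵢ (x)`. -/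
noncomputable def divg (n : ℕ) (W : EuclideanSpace ℝ (Fin n) → EuclideanSpace ℝ (Fin n))
    (x : EuclideanSpace ℝ (Fin n)) : ℝ :=
  ∑ i : Fin n, fderiv ℝ (fun z => W z i) x (EuclideanSpace.single i 1)

section aux

variable {n : ℕ} [NeZero n] {f : ℝ → ℝ}

private noncomputable def sfun (n : ℕ) [NeZero n] (f : ℝ → ℝ)
    (z : EuclideanSpace ℝ (Fin n)) : ℝ :=
  f (z 0) ^ 2 + ∑ i ∈ Finset.univ.erase (0 : Fin n), z i ^ 2

private noncomputable def Gvec (n : ℕ) [NeZero n] (f : ℝ → ℝ) (x : EuclideanSpace ℝ (Fin n)) :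
    EuclideanSpace ℝ (Fin n) :=
  (Real.sqrt (sfun n f x))⁻¹ •
    ((WithLp.equiv 2 (Fin n → ℝ)).symm fun i => if i = 0 then f (x 0) * deriv f (x 0) else x i)

private lemma Gvec_apply (f : ℝ → ℝ) (x : EuclideanSpace ℝ (Fin n)) (i : Fin n) :
    Gvec n f x i = (Real.sqrt (sfun n f x))⁻¹ *
      (if i = 0 then f (x 0) * deriv f (x 0) else x i) := rfl

private lemma sfun_pos (hfpos : ∀ t, 0 < f t) (x : EuclideanSpace ℝ (Fin n)) :
    0 < sfun n f x := by
  have h1 : (0:ℝ) < f (x 0) ^ 2 := pow_pos (hfpos _) 2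
  have h2 : (0:ℝ) ≤ ∑ i ∈ Finset.univ.erase (0 : Fin n), x i ^ 2 :=
    Finset.sum_nonneg fun i _ => sq_nonneg _
  have := add_pos_of_pos_of_nonneg h1 h2
  simpa [sfun] using this

private lemma hasGradientAt_u (hf : ContDiff ℝ 2 f) (hfpos : ∀ t, 0 < f t)
    (x : EuclideanSpace ℝ (Fin n)) :
    HasGradientAt (fun z : EuclideanSpace ℝ (Fin n) =>
      Real.sqrt (f (z 0) ^ 2 + ∑ i ∈ Finset.univ.erase (0 : Fin n), z i ^ 2))
      (Gvec n f x) x := by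
  have hfd : Differentiable ℝ f := hf.differentiable (by norm_num)
  set P : Fin n → EuclideanSpace ℝ (Fin n) →L[ℝ] ℝ := fun i => EuclideanSpace.proj i with hP
  have Papply : ∀ (i : Fin n) (v : EuclideanSpace ℝ (Fin n)), P i v = v i := fun _ _ => rfl
  have hproj : ∀ i : Fin n, HasFDerivAt (fun z : EuclideanSpace ℝ (Fin n) => z i) (P i) x :=
    fun i => (P i).hasFDerivAt
  have h0 : HasFDerivAt (fun z : EuclideanSpace ℝ (Fin n) => f (z 0) ^ 2)
      ((2 * f (x 0) ^ 1 * deriv f (x 0)) • P 0) x := by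
    have hd : HasDerivAt (fun t => f t ^ 2) ((2:ℕ) * f (x 0) ^ 1 * deriv f (x 0)) (x 0) :=
      ((hfd (x 0)).hasDerivAt).pow 2
    have := hd.comp_hasFDerivAt x (hproj 0)
    simpa [Function.comp_def] using this
  have hi : ∀ i ∈ Finset.univ.erase (0 : Fin n),
      HasFDerivAt (fun z : EuclideanSpace ℝ (Fin n) => z i ^ 2) ((2 * x i ^ 1) • P i) x := by
    intro i _
    have hd : HasDerivAt (fun t : ℝ => t ^ 2) ((2:ℕ) * x i ^ 1 * 1) (x i) :=
      (hasDerivAt_id (x i)).pow 2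
    have := hd.comp_hasFDerivAt x (hproj i)
    simpa [Function.comp_def] using this
  have hs : HasFDerivAt (fun z : EuclideanSpace ℝ (Fin n) =>
      f (z 0) ^ 2 + ∑ i ∈ Finset.univ.erase (0 : Fin n), z i ^ 2)
      ((2 * f (x 0) ^ 1 * deriv f (x 0)) • P 0 +
        ∑ i ∈ Finset.univ.erase (0 : Fin n), (2 * x i ^ 1) • P i) x :=
    h0.add (HasFDerivAt.fun_sum hi)
  have hsne : f (x 0) ^ 2 + ∑ i ∈ Finset.univ.erase (0 : Fin n), x i ^ 2 ≠ 0 := by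
    have := (sfun_pos hfpos x).ne'
    simpa [sfun] using this
  have hu : HasFDerivAt (fun z : EuclideanSpace ℝ (Fin n) =>
      Real.sqrt (f (z 0) ^ 2 + ∑ i ∈ Finset.univ.erase (0 : Fin n), z i ^ 2))
      ((1 / (2 * Real.sqrt (f (x 0) ^ 2 + ∑ i ∈ Finset.univ.erase (0 : Fin n), x i ^ 2))) •
        ((2 * f (x 0) ^ 1 * deriv f (x 0)) • P 0 +
          ∑ i ∈ Finset.univ.erase (0 : Fin n), (2 * x i ^ 1) • P i)) x := by
    have hsq := (Real.hasDerivAt_sqrt hsne).comp_hasFDerivAt x hs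
    simpa [Function.comp_def] using hsq
  rw [hasGradientAt_iff_hasFDerivAt]
  refine hu.congr_fderiv ?_
  symm
  apply ContinuousLinearMap.ext
  intro v
  have hsqrt_ne : Real.sqrt (sfun n f x) ≠ 0 :=
    (Real.sqrt_pos.mpr (sfun_pos hfpos x)).ne'
  rw [InnerProductSpace.toDual_apply_apply, PiLp.inner_apply]
  simp only [ContinuousLinearMap.smul_apply, ContinuousLinearMap.add_apply,
    ContinuousLinearMap.sum_apply, Papply, Gvec_apply,
    RCLike.inner_apply, conj_trivial, pow_one, smul_eq_mul]
  simp only [mul_comm (v _) _]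
  rw [← Finset.sum_erase_add Finset.univ _ (Finset.mem_univ (0 : Fin n))]
  have hcongr : ∑ i ∈ Finset.univ.erase (0 : Fin n),
      (Real.sqrt (sfun n f x))⁻¹ * (if i = 0 then f (x 0) * deriv f (x 0) else x i) * v i =
      ∑ i ∈ Finset.univ.erase (0 : Fin n), (Real.sqrt (sfun n f x))⁻¹ * x i * v i :=
    Finset.sum_congr rfl fun i hi => by rw [if_neg (Finset.mem_erase.mp hi).1]
  rw [hcongr, if_pos rfl]
  have hs' : Real.sqrt (f (x 0) ^ 2 + ∑ i ∈ Finset.univ.erase (0 : Fin n), x i ^ 2) =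
      Real.sqrt (sfun n f x) := by rw [sfun]
  rw [hs', mul_add, Finset.mul_sum]
  rw [add_comm]
  congr 1
  · field_simp
  · exact Finset.sum_congr rfl fun i hi => by field_simp

end aux

section aux2

variable {n : ℕ} [NeZero n] {f : ℝ → ℝ}

private lemma norm_Gvec_sq (hfpos : ∀ t, 0 < f t) (x : EuclideanSpace ℝ (Fin n)) :
    ‖Gvec n f x‖ ^ 2 = (f (x 0) ^ 2 * deriv f (x 0) ^ 2 +
      ∑ i ∈ Finset.univ.erase (0 : Fin n), x i ^ 2) / sfun n f x := by
  have hs := sfun_pos hfpos x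
  have hsqrt_ne : Real.sqrt (sfun n f x) ≠ 0 := (Real.sqrt_pos.mpr hs).ne'
  rw [EuclideanSpace.norm_eq, Real.sq_sqrt (Finset.sum_nonneg fun i _ => by positivity)]
  simp only [Gvec_apply, Real.norm_eq_abs, sq_abs]
  rw [← Finset.sum_erase_add Finset.univ _ (Finset.mem_univ (0 : Fin n)), if_pos rfl]
  have hcongr : ∑ i ∈ Finset.univ.erase (0 : Fin n),
      ((Real.sqrt (sfun n f x))⁻¹ * (if i = 0 then f (x 0) * deriv f (x 0) else x i)) ^ 2 =
      ∑ i ∈ Finset.univ.erase (0 : Fin n), (sfun n f x)⁻¹ * x i ^ 2 :=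
    Finset.sum_congr rfl fun i hi => by
      rw [if_neg (Finset.mem_erase.mp hi).1, mul_pow, inv_pow, Real.sq_sqrt hs.le]
  rw [hcongr, ← Finset.mul_sum, mul_pow, inv_pow, Real.sq_sqrt hs.le]
  field_simp
  ring

private lemma one_sub_norm_sq (hfpos : ∀ t, 0 < f t) (x : EuclideanSpace ℝ (Fin n)) :
    1 - ‖Gvec n f x‖ ^ 2 =
      f (x 0) ^ 2 * (1 - deriv f (x 0) ^ 2) / sfun n f x := by
  have hs := sfun_pos hfpos x
  rw [norm_Gvec_sq hfpos x]
  have hsfun : sfun n f x = f (x 0) ^ 2 + ∑ i ∈ Finset.univ.erase (0 : Fin n), x i ^ 2 := rfl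
  rw [eq_div_iff hs.ne', sub_mul, one_mul, div_mul_cancel₀ _ hs.ne', hsfun]
  ring

private lemma one_sub_norm_sq_pos (hfpos : ∀ t, 0 < f t) (hfsp : ∀ t, |deriv f t| < 1)
    (x : EuclideanSpace ℝ (Fin n)) : 0 < 1 - ‖Gvec n f x‖ ^ 2 := by
  rw [one_sub_norm_sq hfpos x]
  have hq : 0 < 1 - deriv f (x 0) ^ 2 := by
    have := (sq_lt_one_iff_abs_lt_one (deriv f (x 0))).mpr (hfsp (x 0))
    linarith
  exact div_pos (mul_pos (pow_pos (hfpos _) 2) hq) (sfun_pos hfpos x)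

private lemma norm_Gvec_lt_one (hfpos : ∀ t, 0 < f t) (hfsp : ∀ t, |deriv f t| < 1)
    (x : EuclideanSpace ℝ (Fin n)) : ‖Gvec n f x‖ < 1 := by
  have h := one_sub_norm_sq_pos hfpos hfsp x
  nlinarith [norm_nonneg (Gvec n f x)]

private lemma sqrt_one_sub_norm_sq (hfpos : ∀ t, 0 < f t) (hfsp : ∀ t, |deriv f t| < 1)
    (x : EuclideanSpace ℝ (Fin n)) :
    Real.sqrt (1 - ‖Gvec n f x‖ ^ 2) =
      f (x 0) * Real.sqrt (1 - deriv f (x 0) ^ 2) / Real.sqrt (sfun n f x) := by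
  have hq : 0 < 1 - deriv f (x 0) ^ 2 := by
    have := (sq_lt_one_iff_abs_lt_one (deriv f (x 0))).mpr (hfsp (x 0))
    linarith
  rw [one_sub_norm_sq hfpos x, Real.sqrt_div (mul_nonneg (sq_nonneg _) hq.le),
    Real.sqrt_mul (sq_nonneg _), Real.sqrt_sq (hfpos _).le]

/-- the vector field in explicit coordinates -/
private lemma W_apply (hfpos : ∀ t, 0 < f t) (hfsp : ∀ t, |deriv f t| < 1)
    (z : EuclideanSpace ℝ (Fin n)) (i : Fin n) :
    ((Real.sqrt (1 - ‖Gvec n f z‖ ^ 2))⁻¹ • Gvec n f z) i =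
      if i = 0 then deriv f (z 0) / Real.sqrt (1 - deriv f (z 0) ^ 2)
      else z i * (f (z 0) * Real.sqrt (1 - deriv f (z 0) ^ 2))⁻¹ := by
  have hs := sfun_pos hfpos z
  have hsqrt_ne : Real.sqrt (sfun n f z) ≠ 0 := (Real.sqrt_pos.mpr hs).ne'
  have hq : 0 < 1 - deriv f (z 0) ^ 2 := by
    have := (sq_lt_one_iff_abs_lt_one (deriv f (z 0))).mpr (hfsp (z 0))
    linarith
  have hq_ne : Real.sqrt (1 - deriv f (z 0) ^ 2) ≠ 0 := (Real.sqrt_pos.mpr hq).ne'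
  have hfne : f (z 0) ≠ 0 := (hfpos _).ne'
  rw [PiLp.smul_apply, sqrt_one_sub_norm_sq hfpos hfsp z, Gvec_apply, smul_eq_mul]
  by_cases hi : i = 0
  · rw [if_pos hi, if_pos hi]
    field_simp
  · rw [if_neg hi, if_neg hi]
    field_simp

end aux2

section aux3

variable {f : ℝ → ℝ}

private lemma deriv_deriv_hasDerivAt (hf : ContDiff ℝ 2 f) (t : ℝ) :
    HasDerivAt (deriv f) (deriv (deriv f) t) t := by
  have h2 : ContDiff ℝ ((1:ℕ∞) + 1) f := by exact_mod_cast hf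
  have h1 : ContDiff ℝ 1 (deriv f) := (contDiff_succ_iff_deriv.mp (by exact_mod_cast h2)).2.2
  exact ((h1.differentiable (by norm_num)) t).hasDerivAt

private lemma hasDerivAt_F (hf : ContDiff ℝ 2 f) (hfsp : ∀ t, |deriv f t| < 1) (t : ℝ) :
    HasDerivAt (fun t => deriv f t / Real.sqrt (1 - deriv f t ^ 2))
      (deriv (deriv f) t / (1 - deriv f t ^ 2) ^ ((3:ℝ) / 2)) t := by
  have hq : 0 < 1 - deriv f t ^ 2 := by
    have := (sq_lt_one_iff_abs_lt_one (deriv f t)).mpr (hfsp t)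
    linarith
  have hqs : Real.sqrt (1 - deriv f t ^ 2) ≠ 0 := (Real.sqrt_pos.mpr hq).ne'
  have hd : HasDerivAt (deriv f) (deriv (deriv f) t) t := deriv_deriv_hasDerivAt hf t
  have hinner : HasDerivAt (fun s => 1 - deriv f s ^ 2)
      (0 - (2:ℕ) * deriv f t ^ 1 * deriv (deriv f) t) t :=
    (hasDerivAt_const t (1:ℝ)).sub (hd.pow 2)
  have hsq : HasDerivAt (fun s => Real.sqrt (1 - deriv f s ^ 2))
      (1 / (2 * Real.sqrt (1 - deriv f t ^ 2)) * (0 - (2:ℕ) * deriv f t ^ 1 * deriv (deriv f) t))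
      t := (Real.hasDerivAt_sqrt hq.ne').comp t hinner
  have hdiv := hd.div hsq hqs
  refine hdiv.congr_deriv ?_
  symm
  rw [show (3:ℝ)/2 = 1 + 1/2 by norm_num, Real.rpow_add hq, Real.rpow_one,
    ← Real.sqrt_eq_rpow]
  have hss : Real.sqrt (1 - deriv f t ^ 2) ^ 2 = 1 - deriv f t ^ 2 := Real.sq_sqrt hq.le
  set S := Real.sqrt (1 - deriv f t ^ 2) with hS
  rw [← hss]
  have hSne : S ≠ 0 := hqs
  field_simp
  linear_combination (-2 * deriv (deriv f) t) * hss

private lemma diff_g (hf : ContDiff ℝ 2 f) (hfpos : ∀ t, 0 < f t)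
    (hfsp : ∀ t, |deriv f t| < 1) (t : ℝ) :
    DifferentiableAt ℝ (fun s => (f s * Real.sqrt (1 - deriv f s ^ 2))⁻¹) t := by
  have hq : 0 < 1 - deriv f t ^ 2 := by
    have := (sq_lt_one_iff_abs_lt_one (deriv f t)).mpr (hfsp t)
    linarith
  have hd : HasDerivAt (deriv f) (deriv (deriv f) t) t := deriv_deriv_hasDerivAt hf t
  have hinner : HasDerivAt (fun s => 1 - deriv f s ^ 2)
      (0 - (2:ℕ) * deriv f t ^ 1 * deriv (deriv f) t) t :=
    (hasDerivAt_const t (1:ℝ)).sub (hd.pow 2)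
  have hsq : DifferentiableAt ℝ (fun s => Real.sqrt (1 - deriv f s ^ 2)) t :=
    ((Real.hasDerivAt_sqrt hq.ne').comp t hinner).differentiableAt
  have hfd : DifferentiableAt ℝ f t := (hf.differentiable (by norm_num)) t
  exact (hfd.mul hsq).inv (ne_of_gt (mul_pos (hfpos t) (Real.sqrt_pos.mpr hq)))

end aux3

/-- If `f` is `C²` with `f > 0`, `|f'| < 1`, and satisfies the ODE
`f''/(1-f'²)^{3/2} + (n-1)/(f (1-f'²)^{1/2}) = n`, then `u(x) = √(f(x₁)² + |x̄|²)` is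
spacelike and solves the constant mean curvature equation `div(Du/√(1-|Du|²)) = n`. -/
theorem semitrough_solves_cmc (n : ℕ) [NeZero n] (hn : 2 ≤ n)
    (f : ℝ → ℝ) (hf : ContDiff ℝ 2 f)
    (hfpos : ∀ t : ℝ, 0 < f t)
    (hfsp : ∀ t : ℝ, |deriv f t| < 1)
    (hODE : ∀ t : ℝ, deriv (deriv f) t / (1 - deriv f t ^ 2) ^ ((3 : ℝ) / 2) +
        ((n : ℝ) - 1) / (f t * (1 - deriv f t ^ 2) ^ ((1 : ℝ) / 2)) = n) :
    (∀ x : EuclideanSpace ℝ (Fin n),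
      ‖gradient (fun z : EuclideanSpace ℝ (Fin n) =>
          Real.sqrt (f (z 0) ^ 2 + ∑ i ∈ Finset.univ.erase (0 : Fin n), z i ^ 2)) x‖ < 1) ∧
    ∀ x : EuclideanSpace ℝ (Fin n),
      divg n (fun z =>
          (Real.sqrt (1 - ‖gradient (fun w : EuclideanSpace ℝ (Fin n) =>
              Real.sqrt (f (w 0) ^ 2 + ∑ i ∈ Finset.univ.erase (0 : Fin n), w i ^ 2)) z‖ ^ 2))⁻¹ •
            gradient (fun w : EuclideanSpace ℝ (Fin n) =>
              Real.sqrt (f (w 0) ^ 2 + ∑ i ∈ Finset.univ.erase (0 : Fin n), w i ^ 2)) z) x = n := by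
  have hgrad : ∀ z : EuclideanSpace ℝ (Fin n),
      gradient (fun w : EuclideanSpace ℝ (Fin n) =>
        Real.sqrt (f (w 0) ^ 2 + ∑ i ∈ Finset.univ.erase (0 : Fin n), w i ^ 2)) z = Gvec n f z :=
    fun z => (hasGradientAt_u hf hfpos z).gradient
  constructor
  · intro x
    rw [hgrad x]
    exact norm_Gvec_lt_one hfpos hfsp x
  intro x
  have hW : ∀ (z : EuclideanSpace ℝ (Fin n)) (i : Fin n),
      ((Real.sqrt (1 - ‖gradient (fun w : EuclideanSpace ℝ (Fin n) =>
          Real.sqrt (f (w 0) ^ 2 + ∑ i ∈ Finset.univ.erase (0 : Fin n), w i ^ 2)) z‖ ^ 2))⁻¹ •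
        gradient (fun w : EuclideanSpace ℝ (Fin n) =>
          Real.sqrt (f (w 0) ^ 2 + ∑ i ∈ Finset.univ.erase (0 : Fin n), w i ^ 2)) z) i =
      if i = 0 then deriv f (z 0) / Real.sqrt (1 - deriv f (z 0) ^ 2)
      else z i * (f (z 0) * Real.sqrt (1 - deriv f (z 0) ^ 2))⁻¹ := by
    intro z i
    rw [hgrad z]
    exact W_apply hfpos hfsp z i
  have hfun : ∀ i : Fin n,
      (fun z : EuclideanSpace ℝ (Fin n) =>
        ((Real.sqrt (1 - ‖gradient (fun w : EuclideanSpace ℝ (Fin n) =>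
            Real.sqrt (f (w 0) ^ 2 + ∑ i ∈ Finset.univ.erase (0 : Fin n), w i ^ 2)) z‖ ^ 2))⁻¹ •
          gradient (fun w : EuclideanSpace ℝ (Fin n) =>
            Real.sqrt (f (w 0) ^ 2 + ∑ i ∈ Finset.univ.erase (0 : Fin n), w i ^ 2)) z) i) =
      fun z : EuclideanSpace ℝ (Fin n) =>
        if i = 0 then deriv f (z 0) / Real.sqrt (1 - deriv f (z 0) ^ 2)
        else z i * (f (z 0) * Real.sqrt (1 - deriv f (z 0) ^ 2))⁻¹ :=
    fun i => funext fun z => hW z i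
  rw [divg]
  simp only [hfun]
  rw [← Finset.sum_erase_add Finset.univ _ (Finset.mem_univ (0 : Fin n))]
  -- the i = 0 term
  have h0fun : (fun z : EuclideanSpace ℝ (Fin n) =>
      if (0 : Fin n) = 0 then deriv f (z 0) / Real.sqrt (1 - deriv f (z 0) ^ 2)
      else z 0 * (f (z 0) * Real.sqrt (1 - deriv f (z 0) ^ 2))⁻¹) =
      fun z : EuclideanSpace ℝ (Fin n) =>
        deriv f (z 0) / Real.sqrt (1 - deriv f (z 0) ^ 2) := by
    simp
  have hF0 : HasFDerivAt
      (fun z : EuclideanSpace ℝ (Fin n) => deriv f (z 0) / Real.sqrt (1 - deriv f (z 0) ^ 2))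
      ((deriv (deriv f) (x 0) / (1 - deriv f (x 0) ^ 2) ^ ((3:ℝ)/2)) •
        (EuclideanSpace.proj (0 : Fin n) : EuclideanSpace ℝ (Fin n) →L[ℝ] ℝ)) x := by
    have := (hasDerivAt_F hf hfsp (x 0)).comp_hasFDerivAt x
      (EuclideanSpace.proj (0 : Fin n) :
        EuclideanSpace ℝ (Fin n) →L[ℝ] ℝ).hasFDerivAt
    simpa [Function.comp_def] using this
  have hterm0 : fderiv ℝ (fun z : EuclideanSpace ℝ (Fin n) =>
      if (0 : Fin n) = 0 then deriv f (z 0) / Real.sqrt (1 - deriv f (z 0) ^ 2)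
      else z 0 * (f (z 0) * Real.sqrt (1 - deriv f (z 0) ^ 2))⁻¹) x
      (EuclideanSpace.single (0 : Fin n) 1) =
      deriv (deriv f) (x 0) / (1 - deriv f (x 0) ^ 2) ^ ((3:ℝ)/2) := by
    rw [h0fun, hF0.fderiv]
    simp [EuclideanSpace.single_apply]
  -- the i ≠ 0 terms
  have htermi : ∀ i ∈ Finset.univ.erase (0 : Fin n),
      fderiv ℝ (fun z : EuclideanSpace ℝ (Fin n) =>
        if i = 0 then deriv f (z 0) / Real.sqrt (1 - deriv f (z 0) ^ 2)
        else z i * (f (z 0) * Real.sqrt (1 - deriv f (z 0) ^ 2))⁻¹) x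
        (EuclideanSpace.single i 1) =
      (f (x 0) * Real.sqrt (1 - deriv f (x 0) ^ 2))⁻¹ := by
    intro i hi
    have hi0 : i ≠ 0 := (Finset.mem_erase.mp hi).1
    have hifun : (fun z : EuclideanSpace ℝ (Fin n) =>
        if i = 0 then deriv f (z 0) / Real.sqrt (1 - deriv f (z 0) ^ 2)
        else z i * (f (z 0) * Real.sqrt (1 - deriv f (z 0) ^ 2))⁻¹) =
        fun z : EuclideanSpace ℝ (Fin n) =>
          z i * (f (z 0) * Real.sqrt (1 - deriv f (z 0) ^ 2))⁻¹ := by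
      simp [hi0]
    have hgc : HasFDerivAt
        (fun z : EuclideanSpace ℝ (Fin n) => (f (z 0) * Real.sqrt (1 - deriv f (z 0) ^ 2))⁻¹)
        ((deriv (fun s => (f s * Real.sqrt (1 - deriv f s ^ 2))⁻¹) (x 0)) •
          (EuclideanSpace.proj (0 : Fin n) : EuclideanSpace ℝ (Fin n) →L[ℝ] ℝ)) x := by
      have := ((diff_g hf hfpos hfsp (x 0)).hasDerivAt).comp_hasFDerivAt x
        (EuclideanSpace.proj (0 : Fin n) :
          EuclideanSpace ℝ (Fin n) →L[ℝ] ℝ).hasFDerivAt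
      simpa [Function.comp_def] using this
    have hmul := ((EuclideanSpace.proj i :
        EuclideanSpace ℝ (Fin n) →L[ℝ] ℝ).hasFDerivAt (x := x)).mul hgc
    have hmul' : HasFDerivAt
        (fun z : EuclideanSpace ℝ (Fin n) =>
          z i * (f (z 0) * Real.sqrt (1 - deriv f (z 0) ^ 2))⁻¹)
        ((EuclideanSpace.proj i : EuclideanSpace ℝ (Fin n) →L[ℝ] ℝ) x •
            (deriv (fun s => (f s * Real.sqrt (1 - deriv f s ^ 2))⁻¹) (x 0) •
              (EuclideanSpace.proj (0 : Fin n) : EuclideanSpace ℝ (Fin n) →L[ℝ] ℝ)) +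
          (f (x 0) * Real.sqrt (1 - deriv f (x 0) ^ 2))⁻¹ •
            (EuclideanSpace.proj i : EuclideanSpace ℝ (Fin n) →L[ℝ] ℝ)) x := hmul
    rw [hifun, hmul'.fderiv]
    have h1 : (EuclideanSpace.single i (1:ℝ)) i = 1 := by
      simp [EuclideanSpace.single_apply]
    have h2 : (EuclideanSpace.single i (1:ℝ)) 0 = 0 := by
      simp [EuclideanSpace.single_apply, hi0.symm]
    simp only [ContinuousLinearMap.add_apply, ContinuousLinearMap.smul_apply,
      smul_eq_mul]
    have hpi : ∀ v : EuclideanSpace ℝ (Fin n), (EuclideanSpace.proj i :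
        EuclideanSpace ℝ (Fin n) →L[ℝ] ℝ) v = v i := fun _ => rfl
    have hp0 : ∀ v : EuclideanSpace ℝ (Fin n), (EuclideanSpace.proj (0 : Fin n) :
        EuclideanSpace ℝ (Fin n) →L[ℝ] ℝ) v = v 0 := fun _ => rfl
    simp only [hpi, hp0]
    rw [h1, h2]
    ring
  rw [Finset.sum_congr rfl htermi, hterm0, Finset.sum_const,
    Finset.card_erase_of_mem (Finset.mem_univ _), Finset.card_univ, Fintype.card_fin,
    nsmul_eq_mul]
  have hODE0 := hODE (x 0)
  rw [← Real.sqrt_eq_rpow, div_eq_mul_inv _ (f (x 0) * _)] at hODE0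
  rw [Nat.cast_sub (by omega : 1 ≤ n), Nat.cast_one]
  linarith
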